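/- Let k be a finite field with q elements and ℓ/k an extension of degree r ≥ 1. Let C ⊆ End_k(ℓ)^s be an ℓ-linear sum-rank metric code of ℓ-dimension 2 whose minimum sum-rank weight is rs − 1. Then s ≤ q + 1 if r = 1, and s ≤ q − 1 if r > 1. -/

import Mathlib

/-- let `k` be a finite field with `q` elements, `ℓ/k` of degree
`r ≥ 1`, and `C ⊆ End_k(ℓ)^s` an `ℓ`-linear sum-rank metric code of
`ℓ`-dimension `2` and minimum sum-rank weight `rs − 1`.  Then `s ≤ q + 1` if
`r = 1`, and `s ≤ q − 1` if `r > 1`. -/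
theorem stmt_13 (k ℓ : Type*) [Field k] [Field ℓ] [Algebra k ℓ] [Fintype k]
    (q r s : ℕ) (hq : Fintype.card k = q)
    (hr : Module.finrank k ℓ = r) (hr1 : 1 ≤ r) (hs : 1 ≤ s)
    (C : Submodule ℓ (Fin s → (ℓ →ₗ[k] ℓ)))
    (hdim : Module.finrank ℓ C = 2)
    (hmin : ∀ f ∈ C, f ≠ 0 →
      r * s - 1 ≤ ∑ i, Module.finrank k (LinearMap.range (f i)))
    (hex : ∃ f ∈ C, f ≠ 0 ∧
      ∑ i, Module.finrank k (LinearMap.range (f i)) = r * s - 1) :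
    (r = 1 → s ≤ q + 1) ∧ (1 < r → s ≤ q - 1) := by
  classical
  have hq2 : 2 ≤ q := by rw [← hq]; exact Fintype.one_lt_card
  rcases Nat.lt_or_ge s 2 with hs2 | hs2
  · exact ⟨fun _ => by omega, fun _ => by omega⟩
  haveI : FiniteDimensional k ℓ := Module.finite_of_finrank_pos (by rw [hr]; omega)
  haveI : Finite ℓ := Module.finite_of_finite k
  haveI : Fintype ℓ := Fintype.ofFinite ℓ
  haveI : Module.Free ℓ C := Module.Free.of_divisionRing ℓ C
  haveI : FiniteDimensional ℓ C := Module.finite_of_finrank_pos (by rw [hdim]; omega)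
  set b : Module.Basis (Fin 2) ℓ C := Module.finBasisOfFinrankEq ℓ C hdim with hb
  set fv : Fin s → (ℓ →ₗ[k] ℓ) := ((b 0 : C) : Fin s → (ℓ →ₗ[k] ℓ)) with hfv
  set gv : Fin s → (ℓ →ₗ[k] ℓ) := ((b 1 : C) : Fin s → (ℓ →ₗ[k] ℓ)) with hgv
  have hfC : fv ∈ C := (b 0).2
  have hgC : gv ∈ C := (b 1).2
  -- every codeword is a combination of fv and gv
  have hspan : ∀ h ∈ C, ∃ a c : ℓ, h = a • fv + c • gv := by
    intro h hh
    refine ⟨b.repr ⟨h, hh⟩ 0, b.repr ⟨h, hh⟩ 1, ?_⟩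
    have h1 := b.sum_repr ⟨h, hh⟩
    rw [Fin.sum_univ_two] at h1
    have h2 := congrArg (Subtype.val) h1
    rw [Submodule.coe_add, Submodule.coe_smul, Submodule.coe_smul] at h2
    exact h2.symm
  -- fv and gv are ℓ-linearly independent
  have hindep : ∀ a c : ℓ, a • fv + c • gv = 0 → a = 0 ∧ c = 0 := by
    intro a c hac
    have h2 : a • b 0 + c • b 1 = 0 := by
      apply Subtype.ext
      rw [Submodule.coe_add, Submodule.coe_smul, Submodule.coe_smul, Submodule.coe_zero]
      exact hac
    have h3 := (Fintype.linearIndependent_iff (v := b)).mp b.linearIndependent ![a, c]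
      (by rw [Fin.sum_univ_two]
          simp only [Matrix.cons_val_zero, Matrix.cons_val_one, Matrix.head_cons]
          exact h2)
    exact ⟨h3 0, h3 1⟩
  -- rank bounds
  have hle : ∀ φ : ℓ →ₗ[k] ℓ, Module.finrank k (LinearMap.range φ) ≤ r :=
    fun φ => hr ▸ LinearMap.finrank_range_le φ
  have hker1 : ∀ (φ : ℓ →ₗ[k] ℓ) (x : ℓ), x ≠ 0 → φ x = 0 →
      Module.finrank k (LinearMap.range φ) + 1 ≤ r := by
    intro φ x hx h0
    have hsp : Submodule.span k {x} ≤ LinearMap.ker φ := by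
      rw [Submodule.span_le, Set.singleton_subset_iff]
      exact h0
    have h2 := Submodule.finrank_mono hsp
    rw [finrank_span_singleton hx] at h2
    have h3 := LinearMap.finrank_range_add_finrank_ker φ
    rw [hr] at h3
    omega
  have hker2 : ∀ (φ : ℓ →ₗ[k] ℓ) (x y : ℓ), LinearIndependent k ![x, y] →
      φ x = 0 → φ y = 0 → Module.finrank k (LinearMap.range φ) + 2 ≤ r := by
    intro φ x y hxy h0x h0y
    have hsp : Submodule.span k (Set.range ![x, y]) ≤ LinearMap.ker φ := by
      rw [Submodule.span_le]
      rintro z ⟨i, rfl⟩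
      fin_cases i <;> simpa [LinearMap.mem_ker]
    have h2 := Submodule.finrank_mono hsp
    rw [finrank_span_eq_card hxy] at h2
    simp only [Fintype.card_fin] at h2
    have h3 := LinearMap.finrank_range_add_finrank_ker φ
    rw [hr] at h3
    omega
  have hsum1 : ∀ (h : Fin s → (ℓ →ₗ[k] ℓ)) (i : Fin s),
      ∑ t, Module.finrank k (LinearMap.range (h t)) ≤
        Module.finrank k (LinearMap.range (h i)) + (s - 1) * r := by
    intro h i
    rw [← Finset.add_sum_erase _ _ (Finset.mem_univ i)]
    have hb1 := Finset.sum_le_card_nsmul (Finset.univ.erase i)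
      (fun t => Module.finrank k (LinearMap.range (h t))) r (fun t _ => hle (h t))
    rw [Finset.card_erase_of_mem (Finset.mem_univ i), Finset.card_univ, Fintype.card_fin,
      smul_eq_mul] at hb1
    exact Nat.add_le_add_left hb1 _
  -- THE KEY LEMMA: a nonzero codeword cannot vanish at two "independent" points
  have lemA : ∀ h ∈ C, h ≠ 0 → ∀ (i j : Fin s) (x y : ℓ), x ≠ 0 → y ≠ 0 →
      h i x = 0 → h j y = 0 → i = j ∧ ∃ c : k, y = c • x := by
    intro h hC hne i j x y hx hy h0x h0y
    have hW := hmin h hC hne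
    rcases eq_or_ne i j with rfl | hij
    · refine ⟨rfl, ?_⟩
      by_contra hc
      push_neg at hc
      have hind : LinearIndependent k ![x, y] := by
        rw [linearIndependent_fin2]
        refine ⟨by simpa using hy, ?_⟩
        intro a ha
        simp only [Matrix.cons_val_one, Matrix.head_cons, Matrix.cons_val_zero] at ha
        rcases eq_or_ne a 0 with rfl | ha0
        · rw [zero_smul] at ha; exact hx ha.symm
        · exact hc a⁻¹ (by rw [← ha, smul_smul, inv_mul_cancel₀ ha0, one_smul])
      have h2 := hker2 (h i) x y hind h0x h0y
      have h3 := hsum1 h i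
      have h4 : (s - 1) * r + r = r * s := by
        obtain ⟨t, rfl⟩ : ∃ t, s = t + 1 := ⟨s - 1, by omega⟩
        rw [Nat.add_sub_cancel]; ring
      generalize hE : (s - 1) * r = E at h3 h4
      generalize hm : r * s = m at hW h4
      omega
    · exfalso
      have di := hker1 (h i) x hx h0x
      have dj := hker1 (h j) y hy h0y
      have hjmem : j ∈ Finset.univ.erase i := Finset.mem_erase.mpr ⟨(Ne.symm hij), Finset.mem_univ j⟩
      have h3 : ∑ t, Module.finrank k (LinearMap.range (h t)) ≤
          Module.finrank k (LinearMap.range (h i)) +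
            Module.finrank k (LinearMap.range (h j)) + (s - 2) * r := by
        rw [← Finset.add_sum_erase _ _ (Finset.mem_univ i), ← Finset.add_sum_erase _ _ hjmem]
        have hb1 := Finset.sum_le_card_nsmul ((Finset.univ.erase i).erase j)
          (fun t => Module.finrank k (LinearMap.range (h t))) r (fun t _ => hle (h t))
        rw [Finset.card_erase_of_mem hjmem, Finset.card_erase_of_mem (Finset.mem_univ i),
          Finset.card_univ, Fintype.card_fin, smul_eq_mul] at hb1
        rw [← add_assoc]
        exact Nat.add_le_add_left hb1 _
      have h4 : (s - 2) * r + r + r = r * s := by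
        obtain ⟨t, rfl⟩ : ∃ t, s = t + 2 := ⟨s - 2, by omega⟩
        rw [Nat.add_sub_cancel]; ring
      generalize hE : (s - 2) * r = E at h3 h4
      generalize hm : r * s = m at hW h4
      omega
  -- existence of a nonzero codeword vanishing at a prescribed point
  have hker_sol : ∀ (i : Fin s) (y : ℓ), ∃ h ∈ C, h ≠ 0 ∧ h i y = 0 := by
    intro i y
    let ev : C →ₗ[ℓ] ℓ :=
      { toFun := fun h => (h : Fin s → (ℓ →ₗ[k] ℓ)) i y
        map_add' := fun h₁ h₂ => rfl
        map_smul' := fun a h => rfl }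
    have hker : LinearMap.ker ev ≠ ⊥ := by
      intro hbot
      have i1 : Function.Injective ev := by
        intro u v huv
        have hu : u - v ∈ LinearMap.ker ev := by
          rw [LinearMap.mem_ker]
          show ((u : Fin s → (ℓ →ₗ[k] ℓ)) - v) i y = 0
          rw [Pi.sub_apply, LinearMap.sub_apply]
          exact sub_eq_zero.mpr huv
        rw [hbot] at hu
        exact sub_eq_zero.mp ((Submodule.mem_bot ℓ).mp hu)
      have h1 := LinearMap.finrank_le_finrank_of_injective i1
      rw [hdim, Module.finrank_self] at h1
      omega
    obtain ⟨h0, hm0, hne0⟩ := Submodule.exists_mem_ne_zero_of_ne_bot hker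
    refine ⟨(h0 : Fin s → (ℓ →ₗ[k] ℓ)), h0.2, ?_, hm0⟩
    intro hzero
    exact hne0 (Subtype.ext hzero)
  -- the pair (fv i x, gv i x) never vanishes for x ≠ 0
  have lemB : ∀ (i : Fin s) (x : ℓ), x ≠ 0 → fv i x = 0 → gv i x = 0 → False := by
    intro i x hx hf0 hg0
    have hall : ∀ h ∈ C, h i x = 0 := by
      intro h hh
      obtain ⟨a, c, rfl⟩ := hspan h hh
      simp [hf0, hg0]
    rcases Nat.lt_or_ge r 2 with hr2 | hr2
    · haveI : Nontrivial (Fin s) := Fin.nontrivial_iff_two_le.mpr hs2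
      obtain ⟨j, hj⟩ := exists_ne i
      obtain ⟨h0, h0C, h0ne, h0j⟩ := hker_sol j 1
      have := lemA h0 h0C h0ne i j x 1 hx one_ne_zero (hall h0 h0C) h0j
      exact hj this.1.symm
    · obtain ⟨y, hy⟩ : ∃ y : ℓ, y ∉ Submodule.span k {x} := by
        by_contra hcon
        push_neg at hcon
        have htop : Submodule.span k {x} = ⊤ := eq_top_iff.mpr fun z _ => hcon z
        have h1 := finrank_span_singleton (K := k) hx
        rw [htop, finrank_top, hr] at h1
        omega
      have hy0 : y ≠ 0 := fun h => hy (h ▸ Submodule.zero_mem _)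
      obtain ⟨h0, h0C, h0ne, h0iy⟩ := hker_sol i y
      obtain ⟨-, c, hc⟩ := lemA h0 h0C h0ne i i x y hx hy0 (hall h0 h0C) h0iy
      exact hy (hc ▸ Submodule.smul_mem _ c (Submodule.mem_span_singleton_self x))
  -- the projective-point map
  set Φ : Fin s × ℓˣ → Option ℓ := fun p =>
    if fv p.1 (p.2 : ℓ) = 0 then none else some (gv p.1 (p.2 : ℓ) / fv p.1 (p.2 : ℓ)) with hΦdef
  have lemC : ∀ (i j : Fin s) (x y : ℓˣ), Φ (i, x) = Φ (j, y) →
      i = j ∧ ∃ c : k, (y : ℓ) = c • (x : ℓ) := by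
    intro i j x y hΦ
    have hxy0 : gv i x * fv j y = fv i x * gv j y := by
      by_cases h1 : fv i (x : ℓ) = 0
      · have h2 : fv j (y : ℓ) = 0 := by
          by_contra h2
          simp only [hΦdef, if_pos h1, if_neg h2] at hΦ
          cases hΦ
        simp [h1, h2]
      · have h2 : fv j (y : ℓ) ≠ 0 := by
          intro h2
          simp only [hΦdef, if_neg h1, if_pos h2] at hΦ
          cases hΦ
        simp only [hΦdef, if_neg h1, if_neg h2, Option.some.injEq] at hΦ
        field_simp at hΦ
        linear_combination hΦ
    set h : Fin s → (ℓ →ₗ[k] ℓ) := (gv i (x : ℓ)) • fv - (fv i (x : ℓ)) • gv with hh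
    have hC' : h ∈ C := Submodule.sub_mem _ (Submodule.smul_mem _ _ hfC) (Submodule.smul_mem _ _ hgC)
    have hne : h ≠ 0 := by
      intro h0
      have h1 : gv i (x : ℓ) • fv + (-(fv i (x : ℓ))) • gv = 0 := by
        have h0' := fun i' z => congrArg (fun f : Fin s → (ℓ →ₗ[k] ℓ) => f i' z) h0
        funext i'; ext z
        have := h0' i' z
        simp only [hh, Pi.sub_apply, Pi.smul_apply, LinearMap.sub_apply, LinearMap.smul_apply,
          smul_eq_mul, Pi.zero_apply, LinearMap.zero_apply] at this
        simp only [Pi.add_apply, Pi.smul_apply, LinearMap.add_apply, LinearMap.smul_apply,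
          smul_eq_mul, Pi.zero_apply, LinearMap.zero_apply]
        linear_combination this
      obtain ⟨e1, e2⟩ := hindep _ _ h1
      exact lemB i x (Units.ne_zero x) (neg_eq_zero.mp e2) e1
    have hix : h i x = 0 := by
      simp only [hh, Pi.sub_apply, Pi.smul_apply, LinearMap.sub_apply, LinearMap.smul_apply,
        smul_eq_mul]
      ring
    have hjy : h j y = 0 := by
      simp only [hh, Pi.sub_apply, Pi.smul_apply, LinearMap.sub_apply, LinearMap.smul_apply,
        smul_eq_mul]
      rw [hxy0]; ring
    exact lemA h hC' hne i j x y (Units.ne_zero x) (Units.ne_zero y) hix hjy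
  -- counting
  have hcard_ℓ : Fintype.card ℓ = q ^ r := by
    rw [Module.card_eq_pow_finrank (K := k) (V := ℓ), hq, hr]
  have hcard_units : Fintype.card ℓˣ = q ^ r - 1 := by
    rw [Fintype.card_units, hcard_ℓ]
  have key : s * (q ^ r - 1) ≤ (q - 1) * (q ^ r + 1) := by
    have hfib : ∀ a ∈ (Finset.univ : Finset (Fin s × ℓˣ)).image Φ,
        ((Finset.univ : Finset (Fin s × ℓˣ)).filter fun p => Φ p = a).card ≤ q - 1 := by
      intro a ha
      obtain ⟨p₀, -, hp₀⟩ := Finset.mem_image.mp ha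
      have hx₀ : ((p₀.2 : ℓ) : ℓ) ≠ 0 := Units.ne_zero _
      have hstep : ∀ p ∈ (Finset.univ : Finset (Fin s × ℓˣ)).filter fun p => Φ p = a,
          p.1 = p₀.1 ∧ ∃ c : k, c ≠ 0 ∧ (p.2 : ℓ) = c • (p₀.2 : ℓ) := by
        intro p hp
        have hpa : Φ p = a := (Finset.mem_filter.mp hp).2
        have hΦeq : Φ (p₀.1, p₀.2) = Φ (p.1, p.2) := by
          rw [Prod.mk.eta, Prod.mk.eta, hp₀, hpa]
        obtain ⟨hje, c, hc⟩ := lemC p₀.1 p.1 p₀.2 p.2 hΦeq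
        refine ⟨hje.symm, c, ?_, hc⟩
        intro hc0
        rw [hc0, zero_smul] at hc
        exact Units.ne_zero p.2 hc
      calc ((Finset.univ : Finset (Fin s × ℓˣ)).filter fun p => Φ p = a).card
          ≤ ((Finset.univ.erase (0 : k)).image (algebraMap k ℓ)).card := by
            apply Finset.card_le_card_of_injOn (fun p => (p.2 : ℓ) * (p₀.2 : ℓ)⁻¹)
            · intro p hp
              obtain ⟨-, c, hc0, hc⟩ := hstep p hp
              refine Finset.mem_image.mpr ⟨c, Finset.mem_erase.mpr ⟨hc0, Finset.mem_univ c⟩, ?_⟩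
              beta_reduce
              rw [hc, Algebra.smul_def, mul_assoc, mul_inv_cancel₀ hx₀, mul_one]
            · intro p hp p' hp' heq
              have h2 : (p.2 : ℓ) = (p'.2 : ℓ) :=
                mul_right_cancel₀ (inv_ne_zero hx₀) heq
              have h1 : p.1 = p'.1 := (hstep p hp).1.trans (hstep p' hp').1.symm
              exact Prod.ext h1 (Units.ext h2)
        _ ≤ q - 1 := by
            rw [Finset.card_image_of_injective _ (algebraMap k ℓ).injective,
              Finset.card_erase_of_mem (Finset.mem_univ _), Finset.card_univ, hq]
    have h1 := Finset.card_le_mul_card_image (Finset.univ : Finset (Fin s × ℓˣ)) (q - 1) hfib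
    have h2 : (Finset.univ : Finset (Fin s × ℓˣ)).card = s * (q ^ r - 1) := by
      rw [Finset.card_univ, Fintype.card_prod, Fintype.card_fin, hcard_units]
    have h3 : ((Finset.univ : Finset (Fin s × ℓˣ)).image Φ).card ≤ q ^ r + 1 := by
      calc ((Finset.univ : Finset (Fin s × ℓˣ)).image Φ).card
          ≤ (Finset.univ : Finset (Option ℓ)).card := Finset.card_le_univ _
        _ = q ^ r + 1 := by rw [Finset.card_univ, Fintype.card_option, hcard_ℓ]
    calc s * (q ^ r - 1) = (Finset.univ : Finset (Fin s × ℓˣ)).card := h2.symm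
      _ ≤ (q - 1) * ((Finset.univ : Finset (Fin s × ℓˣ)).image Φ).card := h1
      _ ≤ (q - 1) * (q ^ r + 1) := Nat.mul_le_mul_left _ h3
  constructor
  · rintro rfl
    rw [pow_one] at key
    have h1 : s * (q - 1) ≤ (q + 1) * (q - 1) := by
      rw [mul_comm (q + 1) (q - 1)]; exact key
    exact Nat.le_of_mul_le_mul_right h1 (by omega)
  · intro h2r
    by_contra hcon
    push_neg at hcon
    have hqr : q * q ≤ q ^ r := by
      calc q * q = q ^ 2 := (sq q).symm
        _ ≤ q ^ r := Nat.pow_le_pow_right (by omega) h2r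
    obtain ⟨Q, hQ⟩ : ∃ Q, q ^ r = Q + 1 := by
      have hpos : 0 < q ^ r := pow_pos (show 0 < q by omega) r
      exact ⟨q ^ r - 1, by omega⟩
    obtain ⟨q', rfl⟩ : ∃ q', q = q' + 2 := ⟨q - 2, by omega⟩
    rw [hQ] at key hqr
    have key' : s * Q ≤ (q' + 1) * (Q + 2) := by
      simpa [Nat.add_sub_cancel] using key
    have hs' : q' + 2 ≤ s := by omega
    have hmul : (q' + 2) * Q ≤ s * Q := Nat.mul_le_mul_right Q hs'
    rw [show (q' + 2) * Q = q' * Q + 2 * Q from by ring] at hmul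
    rw [show (q' + 1) * (Q + 2) = q' * Q + 2 * q' + Q + 2 from by ring] at key'
    rw [show (q' + 2) * (q' + 2) = q' * q' + 4 * q' + 4 from by ring] at hqr
    generalize hA : q' * Q = A at hmul key'
    generalize hB : s * Q = B at hmul key'
    generalize hD : q' * q' = D at hqr
    omega
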